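/- Let n ≥ 1 and fix a finite family of linear symmetries for an object with n indices. Assume the symmetries are compatible in every dimension k ≥ 1. Then there exists a polynomial P with rational coefficients of degree at most n such that for every dimension k ≥ 1 the number of independent components satisfies f(k) = P(k). -/

import Mathlib

/-- The subspace of indexed objects `A : (Fin n → Fin k) → ℝ` satisfying the
homogeneous system induced by a family of `s` linear symmetries, the `l`-th
symmetry having `p l` terms with coefficients `a l j` and permutations `π l j`:
for every index assignment `ι`, `∑ j, a l j * A (ι ∘ π l j) = 0`. -/
def solSpace (n k s : ℕ) (p : Fin s → ℕ)
    (a : (l : Fin s) → Fin (p l) → ℝ)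
    (π : (l : Fin s) → Fin (p l) → Equiv.Perm (Fin n)) :
    Submodule ℝ ((Fin n → Fin k) → ℝ) where
  carrier := {A | ∀ (l : Fin s) (ι : Fin n → Fin k),
    ∑ j : Fin (p l), a l j * A (ι ∘ (π l j)) = 0}
  add_mem' := by
    intro A B hA hB l ι
    have hA' := hA l ι
    have hB' := hB l ι
    simp only [Pi.add_apply, mul_add, Finset.sum_add_distrib]
    rw [hA', hB', add_zero]
  zero_mem' := by
    intro l ι
    simp
  smul_mem' := by
    intro c A hA l ι
    have hA' := hA l ι
    simp only [Pi.smul_apply, smul_eq_mul, mul_left_comm, ← Finset.mul_sum]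
    rw [hA', mul_zero]

/-- Surjective index patterns `Fin n → Fin m`. -/
abbrev SurjMap (n m : ℕ) : Type := {τ : Fin n → Fin m // Function.Surjective τ}

noncomputable instance (n m : ℕ) : Fintype (SurjMap n m) := by
  classical exact Subtype.fintype _

/-- The analogue of `solSpace` on surjective patterns; independent of `k`. -/
def Wspace (n m s : ℕ) (p : Fin s → ℕ)
    (a : (l : Fin s) → Fin (p l) → ℝ)
    (π : (l : Fin s) → Fin (p l) → Equiv.Perm (Fin n)) :
    Submodule ℝ (SurjMap n m → ℝ) where
  carrier := {B | ∀ (l : Fin s) (τ : SurjMap n m),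
    ∑ j : Fin (p l), a l j * B ⟨τ.1 ∘ (π l j), τ.2.comp (π l j).surjective⟩ = 0}
  add_mem' := by
    intro A B hA hB l τ
    have hA' := hA l τ
    have hB' := hB l τ
    simp only [Pi.add_apply, mul_add, Finset.sum_add_distrib]
    rw [hA', hB', add_zero]
  zero_mem' := by
    intro l τ
    simp
  smul_mem' := by
    intro c A hA l τ
    have hA' := hA l τ
    simp only [Pi.smul_apply, smul_eq_mul, mul_left_comm, ← Finset.mul_sum]
    rw [hA', mul_zero]

lemma mem_Wspace {n m s : ℕ} {p : Fin s → ℕ}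
    {a : (l : Fin s) → Fin (p l) → ℝ}
    {π : (l : Fin s) → Fin (p l) → Equiv.Perm (Fin n)} {B : SurjMap n m → ℝ} :
    B ∈ Wspace n m s p a π ↔ ∀ (l : Fin s) (τ : SurjMap n m),
      ∑ j : Fin (p l), a l j * B ⟨τ.1 ∘ (π l j), τ.2.comp (π l j).surjective⟩ = 0 :=
  Iff.rfl

lemma mem_solSpace {n k s : ℕ} {p : Fin s → ℕ}
    {a : (l : Fin s) → Fin (p l) → ℝ}
    {π : (l : Fin s) → Fin (p l) → Equiv.Perm (Fin n)} {A : (Fin n → Fin k) → ℝ} :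
    A ∈ solSpace n k s p a π ↔ ∀ (l : Fin s) (ι : Fin n → Fin k),
      ∑ j : Fin (p l), a l j * A (ι ∘ (π l j)) = 0 :=
  Iff.rfl

/-- Order embeddings `Fin m ↪o Fin k` correspond to `m`-element subsets of `Fin k`. -/
def orderEmbEquivFinsetLen (m k : ℕ) :
    (Fin m ↪o Fin k) ≃ {t : Finset (Fin k) // t.card = m} where
  toFun e := ⟨Finset.univ.image ⇑e, by
    rw [Finset.card_image_of_injective _ e.injective, Finset.card_univ, Fintype.card_fin]⟩
  invFun t := t.1.orderEmbOfFin t.2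
  left_inv e :=
    (Finset.orderEmbOfFin_unique' _
      (fun x => Finset.mem_image_of_mem _ (Finset.mem_univ x))).symm
  right_inv t := by
    apply Subtype.ext
    apply Finset.coe_injective
    rw [Finset.coe_image, Finset.coe_univ, Set.image_univ, Finset.range_orderEmbOfFin]

noncomputable instance (m k : ℕ) : Fintype (Fin m ↪o Fin k) :=
  Fintype.ofEquiv _ (orderEmbEquivFinsetLen m k).symm

lemma card_orderEmb (m k : ℕ) : Fintype.card (Fin m ↪o Fin k) = k.choose m := by
  rw [Fintype.card_congr (orderEmbEquivFinsetLen m k), Fintype.card_finset_len, Fintype.card_fin]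

abbrev IdxT (n k : ℕ) : Type := Σ m : Fin (n+1), (Fin (m : ℕ) ↪o Fin k)

abbrev FactT (n k : ℕ) : Type := Σ me : IdxT n k, SurjMap n (me.1 : ℕ)

def glue {n k : ℕ} (x : FactT n k) : Fin n → Fin k := ⇑x.1.2 ∘ x.2.1

lemma glue_bijective (n k : ℕ) : Function.Bijective (glue (n := n) (k := k)) := by
  have himg : ∀ (m₀ : ℕ) (e₀ : Fin m₀ ↪o Fin k) (τ₀ : Fin n → Fin m₀),
      Function.Surjective τ₀ →
      Finset.univ.image (⇑e₀ ∘ τ₀) = Finset.univ.image ⇑e₀ := by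
    intro m₀ e₀ τ₀ hτ₀
    rw [← Finset.image_image, Finset.image_univ_of_surjective hτ₀]
  have hcard : ∀ (m₀ : ℕ) (e₀ : Fin m₀ ↪o Fin k),
      (Finset.univ.image ⇑e₀).card = m₀ := by
    intro m₀ e₀
    rw [Finset.card_image_of_injective _ e₀.injective, Finset.card_univ, Fintype.card_fin]
  constructor
  · rintro ⟨⟨⟨m, hm⟩, e⟩, ⟨τ, hτ⟩⟩ ⟨⟨⟨m', hm'⟩, e'⟩, ⟨τ', hτ'⟩⟩ h
    simp only [glue] at h
    have hmm : m = m' := by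
      have h1 := hcard m e
      have h2 := hcard m' e'
      rw [← himg m e τ hτ] at h1
      rw [← himg m' e' τ' hτ', ← h] at h2
      rw [h1] at h2
      exact h2
    subst hmm
    have hs : Finset.univ.image ⇑e' = Finset.univ.image ⇑e := by
      rw [← himg m e' τ' hτ', ← h, himg m e τ hτ]
    have he : e' = e := by
      have h1 : e = (Finset.univ.image ⇑e).orderEmbOfFin (hcard m e) :=
        Finset.orderEmbOfFin_unique' _
          (fun x => Finset.mem_image_of_mem _ (Finset.mem_univ x))
      have h2 : e' = (Finset.univ.image ⇑e).orderEmbOfFin (hcard m e) :=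
        Finset.orderEmbOfFin_unique' _
          (fun x => hs ▸ Finset.mem_image_of_mem _ (Finset.mem_univ x))
      rw [h1, h2]
    subst he
    have hτeq : τ = τ' := funext fun i => e'.injective (congrFun h i)
    subst hτeq
    rfl
  · intro ι
    have hcard_le : (Finset.univ.image ι).card ≤ n :=
      le_trans Finset.card_image_le (by simp)
    refine ⟨⟨⟨⟨(Finset.univ.image ι).card, Nat.lt_succ_of_le hcard_le⟩,
      (Finset.univ.image ι).orderEmbOfFin rfl⟩,
      ⟨fun i => ((Finset.univ.image ι).orderIsoOfFin rfl).symm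
        ⟨ι i, Finset.mem_image_of_mem ι (Finset.mem_univ i)⟩, ?_⟩⟩, ?_⟩
    · intro j
      have hmem := ((Finset.univ.image ι).orderIsoOfFin rfl j).2
      rw [Finset.mem_image] at hmem
      obtain ⟨i, -, hi⟩ := hmem
      refine ⟨i, ?_⟩
      simp only []
      have heq : (⟨ι i, Finset.mem_image_of_mem ι (Finset.mem_univ i)⟩ :
          {x // x ∈ Finset.univ.image ι}) = (Finset.univ.image ι).orderIsoOfFin rfl j :=
        Subtype.ext hi
      rw [heq, OrderIso.symm_apply_apply]
    · funext i
      simp only [glue, Function.comp_apply]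
      rw [← Finset.coe_orderIsoOfFin_apply, OrderIso.apply_symm_apply]

/-- The product-of-submodules over `Set.univ` is linearly equivalent to the pi type of the
submodules. -/
def piSubEquiv {ι : Type*} {φ : ι → Type*} [∀ i, AddCommGroup (φ i)] [∀ i, Module ℝ (φ i)]
    (q : ∀ i, Submodule ℝ (φ i)) : (Submodule.pi Set.univ q) ≃ₗ[ℝ] Π i, q i where
  toFun x i := ⟨x.1 i, x.2 i (Set.mem_univ i)⟩
  map_add' x y := rfl
  map_smul' c x := rfl
  invFun y := ⟨fun i => (y i).1, fun i _ => (y i).2⟩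
  left_inv x := rfl
  right_inv y := rfl

lemma finrank_solSpace (n k s : ℕ) (p : Fin s → ℕ)
    (a : (l : Fin s) → Fin (p l) → ℝ)
    (π : (l : Fin s) → Fin (p l) → Equiv.Perm (Fin n)) :
    Module.finrank ℝ (solSpace n k s p a π)
      = ∑ m ∈ Finset.range (n+1), k.choose m * Module.finrank ℝ (Wspace n m s p a π) := by
  classical
  let D : FactT n k ≃ (Fin n → Fin k) := Equiv.ofBijective glue (glue_bijective n k)
  have hD : ∀ (me : IdxT n k) (τ : SurjMap n (me.1 : ℕ)),
      D ⟨me, τ⟩ = ⇑me.2 ∘ τ.1 := fun _ _ => rfl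
  have hDsymm : ∀ (me : IdxT n k) (τ : SurjMap n (me.1 : ℕ)),
      D.symm (⇑me.2 ∘ τ.1) = ⟨me, τ⟩ := by
    intro me τ
    rw [Equiv.symm_apply_eq, hD]
  let E : ((Fin n → Fin k) → ℝ) ≃ₗ[ℝ] Π me : IdxT n k, (SurjMap n (me.1 : ℕ) → ℝ) :=
    (LinearEquiv.funCongrLeft ℝ ℝ D).trans
      (LinearEquiv.piCurry ℝ (fun (me : IdxT n k) (_ : SurjMap n (me.1 : ℕ)) => ℝ))
  have hEsymm : ∀ (B : Π me : IdxT n k, (SurjMap n (me.1 : ℕ) → ℝ)) (ι : Fin n → Fin k),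
      E.symm B ι = B (D.symm ι).1 (D.symm ι).2 := by
    intro B ι
    rfl
  have hmap : (solSpace n k s p a π).map
      (E : ((Fin n → Fin k) → ℝ) →ₗ[ℝ] Π me : IdxT n k, (SurjMap n (me.1 : ℕ) → ℝ))
      = Submodule.pi Set.univ (fun me : IdxT n k => Wspace n (me.1 : ℕ) s p a π) := by
    ext B
    rw [Submodule.mem_map_equiv, Submodule.mem_pi, mem_solSpace]
    have key : ∀ (me : IdxT n k) (τ : SurjMap n (me.1 : ℕ)) (l : Fin s) (j : Fin (p l)),
        E.symm B ((⇑me.2 ∘ τ.1) ∘ (π l j))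
          = B me ⟨τ.1 ∘ (π l j), τ.2.comp (π l j).surjective⟩ := by
      intro me τ l j
      rw [hEsymm]
      have hcomp : (⇑me.2 ∘ τ.1) ∘ ⇑(π l j)
          = ⇑me.2 ∘ (⟨τ.1 ∘ (π l j), τ.2.comp (π l j).surjective⟩ : SurjMap n (me.1 : ℕ)).1 :=
        rfl
      rw [hcomp, hDsymm]
    constructor
    · intro h me _
      rw [mem_Wspace]
      intro l τ
      have h0 := h l (⇑me.2 ∘ τ.1)
      simp only [key] at h0
      exact h0
    · intro h l ι
      obtain ⟨⟨me, τ⟩, rfl⟩ : ∃ x : FactT n k, D x = ι := ⟨D.symm ι, D.apply_symm_apply ι⟩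
      have h0 := (mem_Wspace.mp (h me (Set.mem_univ me))) l τ
      rw [hD]
      simp only [key]
      exact h0
  rw [← LinearEquiv.finrank_map_eq E, hmap,
    LinearEquiv.finrank_eq (piSubEquiv (fun me : IdxT n k => Wspace n (me.1 : ℕ) s p a π)),
    Module.finrank_pi_fintype ℝ, ← Finset.univ_sigma_univ, Finset.sum_sigma]
  rw [← Fin.sum_univ_eq_sum_range
    (fun m => k.choose m * Module.finrank ℝ (Wspace n m s p a π))]
  refine Finset.sum_congr rfl ?_
  intro m _
  simp only [Finset.sum_const, Finset.card_univ, card_orderEmb, smul_eq_mul]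
  rw [← card_orderEmb m k, ← Finset.card_univ, ← smul_eq_mul, ← Finset.sum_const]

theorem numIndepComponents_is_polynomial
    (n s : ℕ) (hn : 1 ≤ n) (p : Fin s → ℕ)
    (a : (l : Fin s) → Fin (p l) → ℝ)
    (π : (l : Fin s) → Fin (p l) → Equiv.Perm (Fin n))
    (b : Fin s → ℝ)
    (hcompat : ∀ k : ℕ, 1 ≤ k → ∃ A : (Fin n → Fin k) → ℝ,
      ∀ (l : Fin s) (ι : Fin n → Fin k),
        ∑ j : Fin (p l), a l j * A (ι ∘ (π l j)) = b l) :
    ∃ P : Polynomial ℚ, P.natDegree ≤ n ∧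
      ∀ k : ℕ, 1 ≤ k →
        (Module.finrank ℝ (solSpace n k s p a π) : ℚ) = P.eval (k : ℚ) := by
  classical
  refine ⟨∑ m ∈ Finset.range (n+1),
    Polynomial.C ((Module.finrank ℝ (Wspace n m s p a π) : ℚ) / (m.factorial : ℚ))
      * descPochhammer ℚ m, ?_, ?_⟩
  · refine Polynomial.natDegree_sum_le_of_forall_le _ _ ?_
    intro m hm
    refine le_trans (Polynomial.natDegree_C_mul_le _ _) ?_
    rw [descPochhammer_natDegree]
    exact Nat.lt_succ_iff.mp (Finset.mem_range.mp hm)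
  · intro k hk
    rw [finrank_solSpace, Polynomial.eval_finset_sum]
    push_cast
    refine Finset.sum_congr rfl ?_
    intro m _
    rw [Polynomial.eval_mul, Polynomial.eval_C]
    have hev : (descPochhammer ℚ m).eval ((k : ℕ) : ℚ) = (k.descFactorial m : ℚ) :=
      descPochhammer_eval_eq_descFactorial ℚ k m
    rw [hev, Nat.descFactorial_eq_factorial_mul_choose]
    have hfac : (m.factorial : ℚ) ≠ 0 := Nat.cast_ne_zero.mpr m.factorial_ne_zero
    push_cast
    field_simp
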